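/- arXiv:math/0603089 — 2 statements merged into one kernel-verified Lean document; each statement's English description precedes it below -/
import Mathlib

section
/- Let g = g_{5,3,1(λ1,λ2)} and let F = (α, β, γ, δ, σ) ∈ g*. Then the orbit Ω_F is described as follows: (1) if γ = δ = σ = 0 then Ω_F = {F}; (2) if γ = δ = 0 and σ ≠ 0 then Ω_F = {(α, y, 0, 0, s) : y ∈ ℝ, σs > 0}; (3) if γ = 0, δ ≠ 0, σ = 0 then Ω_F = {(α, y, 0, t, 0) : y ∈ ℝ, δt > 0}; (4) if γ = 0, δ ≠ 0, σ ≠ 0 then Ω_F = {(α, y, 0, t, s) : y ∈ ℝ, σs > 0, t = δ(s/σ)^{λ2}}; (5) if γ ≠ 0, δ = σ = 0 then Ω_F = {(x, y, z, 0, 0) : y ∈ ℝ, γz > 0, λ1·x = λ1·α + γ − z}; (6) if γ ≠ 0, δ = 0, σ ≠ 0 then Ω_F = {(x, y, z, 0, s) : y ∈ ℝ, σs > 0, λ1·x = λ1·α + γ − z and λ1·x = λ1·α + γ(1 − (s/σ)^{λ1})}; (7) if γ ≠ 0, δ ≠ 0, σ = 0 then Ω_F = {(x, y, z, t, 0) :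 y ∈ ℝ, δt > 0, λ1·x = λ1·α + γ − z and λ1·x = λ1·α + γ(1 − (t/δ)^{λ1/λ2})}; (8) if γ ≠ 0, δ ≠ 0, σ ≠ 0 then Ω_F = {(x, y, z, t, s) : y ∈ ℝ, σs > 0, λ1·x = λ1·α + γ − z, λ1·x = λ1·α + γ(1 − (s/σ)^{λ1}), t = δ(s/σ)^{λ2}}. -/
/-- The Lie bracket of g_{5,3,1(λ₁,λ₂)}: [X1,X2] = X3, [X2,X3] = λ₁·X3, [X2,X4] = λ₂·X4, [X2,X5] = X5,
written in coordinates with respect to the basis (X₁, X₂, X₃, X₄, X₅) (all other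
brackets of basis vectors vanish); it is the bilinear extension of the structure
constants above. -/
def bracketg531 (l1 l2 : ℝ) (U V : Fin 5 → ℝ) : Fin 5 → ℝ :=
  ![0, 0,
    (U 0 * V 1 - U 1 * V 0) + l1 * (U 1 * V 2 - U 2 * V 1),
    l2 * (U 1 * V 3 - U 3 * V 1),
    U 1 * V 4 - U 4 * V 1]

/-- The matrix of the adjoint endomorphism ad_U = [U, ·] in the basis (X₁, ..., X₅):
column j holds the coordinates of [U, Xⱼ]. -/
def adg531 (l1 l2 : ℝ) (U : Fin 5 → ℝ) : Matrix (Fin 5) (Fin 5) ℝ :=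
  Matrix.of fun i j => bracketg531 l1 l2 U (Pi.single j 1) i

/-- The orbit Ω_F = { F ∘ exp(ad_U) : U ∈ g } in coordinates with respect to the dual
basis: a functional F' is identified with the vector (F'(X₁), ..., F'(X₅)), so that
F ∘ exp(ad_U) corresponds to the row-vector–matrix product vecMul F (exp (ad_U)). -/
noncomputable def orbitg531 (l1 l2 : ℝ) (F : Fin 5 → ℝ) : Set (Fin 5 → ℝ) :=
  Set.range fun U : Fin 5 → ℝ => Matrix.vecMul F (NormedSpace.exp (adg531 l1 l2 U))


noncomputable def gfun (c : ℝ) : ℝ := ∑' n : ℕ, c ^ n / (n + 1).factorial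

lemma gfun_summable (c : ℝ) : Summable (fun n : ℕ => c ^ n / (n + 1).factorial) := by
  apply Summable.of_norm
  apply Summable.of_nonneg_of_le (fun n => norm_nonneg _)
    (fun n => ?_) (Real.summable_pow_div_factorial |c|)
  rw [Real.norm_eq_abs, abs_div, abs_pow, abs_of_nonneg (by positivity : (0:ℝ) ≤ ((n+1).factorial : ℝ))]
  apply div_le_div_of_nonneg_left ?_ ?_ ?_
  · positivity
  · exact_mod_cast Nat.factorial_pos n
  · exact_mod_cast Nat.factorial_le (Nat.le_succ n)

lemma gfun_spec (c : ℝ) : 1 + c * gfun c = Real.exp c := by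
  have h : Real.exp c = ∑' n : ℕ, c ^ n / n.factorial := by
    rw [Real.exp_eq_exp_ℝ, NormedSpace.exp_eq_tsum_div]
  rw [h, Summable.tsum_eq_zero_add (Real.summable_pow_div_factorial c)]
  simp only [pow_zero, Nat.factorial_zero, Nat.cast_one, div_one]
  congr 1
  rw [gfun, ← Summable.tsum_mul_left c (gfun_summable c)]
  congr 1; funext n
  rw [pow_succ]; ring

lemma gfun_zero : gfun 0 = 1 := by
  rw [gfun, tsum_eq_single 0]
  · simp
  · intro n hn; simp [zero_pow hn]

lemma gfun_ne_zero (c : ℝ) : gfun c ≠ 0 := by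
  rcases eq_or_ne c 0 with rfl | hc
  · rw [gfun_zero]; norm_num
  · intro h
    have := gfun_spec c
    rw [h, mul_zero, add_zero] at this
    rw [← Real.exp_zero] at this
    exact hc (Real.exp_eq_exp.mp this.symm)

open Matrix in
lemma exp_of_sq (A : Matrix (Fin 5) (Fin 5) ℝ) (c : ℝ) (h : A * A = c • A) :
    NormedSpace.exp A = 1 + gfun c • A := by
  letI : SeminormedRing (Matrix (Fin 5) (Fin 5) ℝ) := Matrix.linftyOpSemiNormedRing
  letI : NormedRing (Matrix (Fin 5) (Fin 5) ℝ) := Matrix.linftyOpNormedRing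
  letI : NormedAlgebra ℝ (Matrix (Fin 5) (Fin 5) ℝ) := Matrix.linftyOpNormedAlgebra
  have hpow : ∀ n : ℕ, A ^ (n + 1) = c ^ n • A := by
    intro n; induction n with
    | zero => simp
    | succ n ih =>
      rw [pow_succ, ih, smul_mul_assoc, h, smul_smul, ← pow_succ]
  rw [NormedSpace.exp_eq_tsum ℝ]
  beta_reduce
  erw [Summable.tsum_eq_zero_add (NormedSpace.expSeries_summable' (𝕂 := ℝ) A)]
  simp only [pow_zero, Nat.factorial_zero, Nat.cast_one, inv_one, one_smul]
  congr 1
  rw [gfun, ← Summable.tsum_smul_const (gfun_summable c) A]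
  congr 1; funext n
  rw [hpow n, smul_smul]
  congr 1
  rw [div_eq_mul_inv, mul_comm]

def M2mat (l1 : ℝ) (U : Fin 5 → ℝ) : Matrix (Fin 5) (Fin 5) ℝ :=
  !![0,0,0,0,0; 0,0,0,0,0; -U 1, U 0 - l1 * U 2, l1 * U 1, 0, 0; 0,0,0,0,0; 0,0,0,0,0]

def M3mat (l2 : ℝ) (U : Fin 5 → ℝ) : Matrix (Fin 5) (Fin 5) ℝ :=
  !![0,0,0,0,0; 0,0,0,0,0; 0,0,0,0,0; 0, -(l2 * U 3), 0, l2 * U 1, 0; 0,0,0,0,0]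

def M4mat (U : Fin 5 → ℝ) : Matrix (Fin 5) (Fin 5) ℝ :=
  !![0,0,0,0,0; 0,0,0,0,0; 0,0,0,0,0; 0,0,0,0,0; 0, -U 4, 0, 0, U 1]

lemma ad_decomp (l1 l2 : ℝ) (U : Fin 5 → ℝ) :
    adg531 l1 l2 U = M2mat l1 U + M3mat l2 U + M4mat U := by
  ext i j
  fin_cases i <;> fin_cases j <;>
    simp [adg531, bracketg531, M2mat, M3mat, M4mat, Pi.single_apply, Matrix.vecHead, Matrix.vecTail] <;> ring_nf

section prods
variable (l1 l2 : ℝ) (U : Fin 5 → ℝ)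

lemma M2_sq : M2mat l1 U * M2mat l1 U = (l1 * U 1) • M2mat l1 U := by
  ext i j; fin_cases i <;> fin_cases j <;>
    simp [M2mat, Matrix.mul_apply, Fin.sum_univ_five, Matrix.vecHead, Matrix.vecTail] <;> ring_nf

lemma M3_sq : M3mat l2 U * M3mat l2 U = (l2 * U 1) • M3mat l2 U := by
  ext i j; fin_cases i <;> fin_cases j <;>
    simp [M3mat, Matrix.mul_apply, Fin.sum_univ_five, Matrix.vecHead, Matrix.vecTail] <;> ring_nf

lemma M4_sq : M4mat U * M4mat U = (U 1) • M4mat U := by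
  ext i j; fin_cases i <;> fin_cases j <;>
    simp [M4mat, Matrix.mul_apply, Fin.sum_univ_five, Matrix.vecHead, Matrix.vecTail] <;> ring_nf

lemma M23 : M2mat l1 U * M3mat l2 U = 0 := by
  ext i j; fin_cases i <;> fin_cases j <;>
    simp [M2mat, M3mat, Matrix.mul_apply, Fin.sum_univ_five, Matrix.vecHead, Matrix.vecTail]

lemma M32 : M3mat l2 U * M2mat l1 U = 0 := by
  ext i j; fin_cases i <;> fin_cases j <;>
    simp [M2mat, M3mat, Matrix.mul_apply, Fin.sum_univ_five, Matrix.vecHead, Matrix.vecTail]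

lemma M24 : M2mat l1 U * M4mat U = 0 := by
  ext i j; fin_cases i <;> fin_cases j <;>
    simp [M2mat, M4mat, Matrix.mul_apply, Fin.sum_univ_five, Matrix.vecHead, Matrix.vecTail]

lemma M42 : M4mat U * M2mat l1 U = 0 := by
  ext i j; fin_cases i <;> fin_cases j <;>
    simp [M2mat, M4mat, Matrix.mul_apply, Fin.sum_univ_five, Matrix.vecHead, Matrix.vecTail]

lemma M34 : M3mat l2 U * M4mat U = 0 := by
  ext i j; fin_cases i <;> fin_cases j <;>
    simp [M3mat, M4mat, Matrix.mul_apply, Fin.sum_univ_five, Matrix.vecHead, Matrix.vecTail]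

lemma M43 : M4mat U * M3mat l2 U = 0 := by
  ext i j; fin_cases i <;> fin_cases j <;>
    simp [M3mat, M4mat, Matrix.mul_apply, Fin.sum_univ_five, Matrix.vecHead, Matrix.vecTail]

end prods

lemma exp_ad (l1 l2 : ℝ) (U : Fin 5 → ℝ) :
    NormedSpace.exp (adg531 l1 l2 U) =
      1 + gfun (l1 * U 1) • M2mat l1 U + gfun (l2 * U 1) • M3mat l2 U
        + gfun (U 1) • M4mat U := by
  have c23 : Commute (M2mat l1 U) (M3mat l2 U) := by
    rw [Commute, SemiconjBy, M23, M32]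
  have c24 : Commute (M2mat l1 U) (M4mat U) := by
    rw [Commute, SemiconjBy, M24, M42]
  have c34 : Commute (M3mat l2 U) (M4mat U) := by
    rw [Commute, SemiconjBy, M34, M43]
  rw [ad_decomp, add_assoc, Matrix.exp_add_of_commute _ _ (c23.add_right c24),
    Matrix.exp_add_of_commute _ _ c34,
    exp_of_sq _ _ (M2_sq l1 U), exp_of_sq _ _ (M3_sq l2 U), exp_of_sq _ _ (M4_sq U)]
  simp only [mul_add, add_mul, mul_one, one_mul, smul_mul_assoc, mul_smul_comm,
    M23 l1 l2 U, M24 l1 U, M34 l2 U, smul_zero, add_zero, zero_mul, mul_zero]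

lemma key (l1 l2 α β γ δ σ : ℝ) (U : Fin 5 → ℝ) :
    Matrix.vecMul ![α,β,γ,δ,σ] (NormedSpace.exp (adg531 l1 l2 U)) =
      ![α - γ * U 1 * gfun (l1 * U 1),
        β + γ * (U 0 - l1 * U 2) * gfun (l1 * U 1) - δ * (l2 * U 3) * gfun (l2 * U 1)
          - σ * U 4 * gfun (U 1),
        γ * Real.exp (l1 * U 1),
        δ * Real.exp (l2 * U 1),
        σ * Real.exp (U 1)] := by
  rw [exp_ad]
  funext j
  fin_cases j
  · simp [Matrix.vecMul, dotProduct, Fin.sum_univ_five, M2mat, M3mat, M4mat,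
      Matrix.one_apply, Matrix.vecHead, Matrix.vecTail]
    ring
  · simp [Matrix.vecMul, dotProduct, Fin.sum_univ_five, M2mat, M3mat, M4mat,
      Matrix.one_apply, Matrix.vecHead, Matrix.vecTail]
    ring
  · simp [Matrix.vecMul, dotProduct, Fin.sum_univ_five, M2mat, M3mat, M4mat,
      Matrix.one_apply, Matrix.vecHead, Matrix.vecTail]
    rw [← gfun_spec (l1 * U 1)]; ring_nf; tauto
  · simp [Matrix.vecMul, dotProduct, Fin.sum_univ_five, M2mat, M3mat, M4mat,
      Matrix.one_apply, Matrix.vecHead, Matrix.vecTail]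
    rw [← gfun_spec (l2 * U 1)]; ring_nf; tauto
  · simp [Matrix.vecMul, dotProduct, Fin.sum_univ_five, M2mat, M3mat, M4mat,
      Matrix.one_apply, Matrix.vecHead, Matrix.vecTail]
    rw [← gfun_spec (U 1)]; ring_nf; tauto

lemma div_pos_of_mul_pos' {a b : ℝ} (h : 0 < a * b) : 0 < b / a := by
  rcases mul_pos_iff.mp h with ⟨ha, hb⟩ | ⟨ha, hb⟩
  · exact div_pos hb ha
  · exact div_pos_of_neg_of_neg hb ha

lemma exp_rpow' (a l : ℝ) : (Real.exp a) ^ l = Real.exp (l * a) := by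
  rw [Real.rpow_def_of_pos (Real.exp_pos a), Real.log_exp, mul_comm]

lemma sq_exp_pos (σ c : ℝ) (hσ : σ ≠ 0) : 0 < σ * (σ * Real.exp c) := by
  have h1 := mul_self_pos.mpr hσ
  have h2 := Real.exp_pos c
  nlinarith

lemma mem_orbit_iff (l1 l2 α β γ δ σ : ℝ) (p : Fin 5 → ℝ) :
    p ∈ orbitg531 l1 l2 ![α, β, γ, δ, σ] ↔ ∃ U : Fin 5 → ℝ,
      ![α - γ * U 1 * gfun (l1 * U 1),
        β + γ * (U 0 - l1 * U 2) * gfun (l1 * U 1) - δ * (l2 * U 3) * gfun (l2 * U 1)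
          - σ * U 4 * gfun (U 1),
        γ * Real.exp (l1 * U 1),
        δ * Real.exp (l2 * U 1),
        σ * Real.exp (U 1)] = p := by
  constructor
  · rintro ⟨U, hU⟩
    exact ⟨U, by rw [← key l1 l2 α β γ δ σ U]; exact hU⟩
  · rintro ⟨U, hU⟩
    exact ⟨U, show Matrix.vecMul _ _ = p by rw [key l1 l2 α β γ δ σ U]; exact hU⟩

theorem kOrbits_g531 (l1 l2 α β γ δ σ : ℝ) (h10 : l1 ≠ 0) (h11 : l1 ≠ 1) (h20 : l2 ≠ 0) (h21 : l2 ≠ 1) (h12 : l1 ≠ l2) :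
    (γ = 0 → δ = 0 → σ = 0 → orbitg531 l1 l2 ![α, β, γ, δ, σ] = {![α, β, γ, δ, σ]}) ∧
    (γ = 0 → δ = 0 → σ ≠ 0 → orbitg531 l1 l2 ![α, β, γ, δ, σ] = {p | ∃ y s : ℝ, σ * s > 0 ∧ p = ![α, y, 0, 0, s]}) ∧
    (γ = 0 → δ ≠ 0 → σ = 0 → orbitg531 l1 l2 ![α, β, γ, δ, σ] = {p | ∃ y t : ℝ, δ * t > 0 ∧ p = ![α, y, 0, t, 0]}) ∧
    (γ = 0 → δ ≠ 0 → σ ≠ 0 → orbitg531 l1 l2 ![α, β, γ, δ, σ] = {p | ∃ y t s : ℝ, σ * s > 0 ∧ t = δ * (s / σ) ^ l2 ∧ p = ![α, y, 0, t, s]}) ∧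
    (γ ≠ 0 → δ = 0 → σ = 0 → orbitg531 l1 l2 ![α, β, γ, δ, σ] = {p | ∃ x y z : ℝ, γ * z > 0 ∧ l1 * x = l1 * α + γ - z ∧ p = ![x, y, z, 0, 0]}) ∧
    (γ ≠ 0 → δ = 0 → σ ≠ 0 → orbitg531 l1 l2 ![α, β, γ, δ, σ] = {p | ∃ x y z s : ℝ, σ * s > 0 ∧ l1 * x = l1 * α + γ - z ∧ l1 * x = l1 * α + γ * (1 - (s / σ) ^ l1) ∧ p = ![x, y, z, 0, s]}) ∧
    (γ ≠ 0 → δ ≠ 0 → σ = 0 → orbitg531 l1 l2 ![α, β, γ, δ, σ] = {p | ∃ x y z t : ℝ, δ * t > 0 ∧ l1 * x = l1 * α + γ - z ∧ l1 * x = l1 * α + γ * (1 - (t / δ) ^ (l1 / l2)) ∧ p = ![x, y, z, t, 0]}) ∧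
    (γ ≠ 0 → δ ≠ 0 → σ ≠ 0 → orbitg531 l1 l2 ![α, β, γ, δ, σ] = {p | ∃ x y z t s : ℝ, σ * s > 0 ∧ l1 * x = l1 * α + γ - z ∧ l1 * x = l1 * α + γ * (1 - (s / σ) ^ l1) ∧ t = δ * (s / σ) ^ l2 ∧ p = ![x, y, z, t, s]}) := by
  refine ⟨?c1, ?c2, ?c3, ?c4, ?c5, ?c6, ?c7, ?c8⟩
  case c1 =>
    rintro rfl rfl rfl
    ext p
    rw [mem_orbit_iff, Set.mem_singleton_iff]
    constructor
    · rintro ⟨U, hU⟩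
      rw [← hU]; funext j; fin_cases j <;> simp
    · rintro rfl
      exact ⟨0, by funext j; fin_cases j <;> simp⟩
  case c2 =>
    rintro rfl rfl hσ
    ext p
    rw [mem_orbit_iff, Set.mem_setOf_eq]
    constructor
    · rintro ⟨U, hU⟩
      refine ⟨β - σ * U 4 * gfun (U 1), σ * Real.exp (U 1), sq_exp_pos σ (U 1) hσ, ?_⟩
      rw [← hU]; funext j; fin_cases j <;> simp <;> ring
    · rintro ⟨y, s, hs, rfl⟩
      have hsd : 0 < s / σ := div_pos_of_mul_pos' hs
      refine ⟨![0, Real.log (s / σ), 0, 0, (β - y) / (σ * gfun (Real.log (s / σ)))], ?_⟩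
      funext j; fin_cases j
      · simp
      · simp
        field_simp [gfun_ne_zero]
        ring
      · simp
      · simp
      · simp [Real.exp_log hsd]
        field_simp
  case c3 =>
    rintro rfl hδ rfl
    ext p
    rw [mem_orbit_iff, Set.mem_setOf_eq]
    constructor
    · rintro ⟨U, hU⟩
      refine ⟨β - δ * (l2 * U 3) * gfun (l2 * U 1), δ * Real.exp (l2 * U 1),
        sq_exp_pos δ (l2 * U 1) hδ, ?_⟩
      rw [← hU]; funext j; fin_cases j <;> simp <;> ring
    · rintro ⟨y, t, ht, rfl⟩
      have htd : 0 < t / δ := div_pos_of_mul_pos' ht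
      refine ⟨![0, Real.log (t / δ) / l2, 0, (β - y) / (δ * l2 * gfun (Real.log (t / δ))), 0], ?_⟩
      have hl2 : l2 * (Real.log (t / δ) / l2) = Real.log (t / δ) := by field_simp
      funext j; fin_cases j
      · simp
      · simp [hl2]
        field_simp [gfun_ne_zero]
        ring
      · simp
      · simp [hl2, Real.exp_log htd]
        field_simp
      · simp
  case c4 =>
    rintro rfl hδ hσ
    ext p
    rw [mem_orbit_iff, Set.mem_setOf_eq]
    constructor
    · rintro ⟨U, hU⟩
      refine ⟨β - δ * (l2 * U 3) * gfun (l2 * U 1) - σ * U 4 * gfun (U 1),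
        δ * Real.exp (l2 * U 1), σ * Real.exp (U 1), sq_exp_pos σ (U 1) hσ, ?_, ?_⟩
      · have hss : σ * Real.exp (U 1) / σ = Real.exp (U 1) := by field_simp
        rw [hss, exp_rpow']
      · rw [← hU]; funext j; fin_cases j <;> simp <;> ring
    · rintro ⟨y, t, s, hs, ht, rfl⟩
      have hsd : 0 < s / σ := div_pos_of_mul_pos' hs
      have hexp : Real.exp (Real.log (s / σ)) = s / σ := Real.exp_log hsd
      refine ⟨![0, Real.log (s / σ), 0, 0, (β - y) / (σ * gfun (Real.log (s / σ)))], ?_⟩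
      funext j; fin_cases j
      · simp
      · simp
        field_simp [gfun_ne_zero]
        ring
      · simp
      · simp
        rw [← exp_rpow', hexp]
        exact ht.symm
      · simp [hexp]
        field_simp
  case c5 =>
    rintro hγ rfl rfl
    ext p
    rw [mem_orbit_iff, Set.mem_setOf_eq]
    constructor
    · rintro ⟨U, hU⟩
      refine ⟨α - γ * U 1 * gfun (l1 * U 1), β + γ * (U 0 - l1 * U 2) * gfun (l1 * U 1),
        γ * Real.exp (l1 * U 1), sq_exp_pos γ (l1 * U 1) hγ, ?_, ?_⟩
      · linear_combination (-γ) * gfun_spec (l1 * U 1)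
      · rw [← hU]; funext j; fin_cases j <;> simp <;> ring
    · rintro ⟨x, y, z, hz, h1, rfl⟩
      have hzd : 0 < z / γ := div_pos_of_mul_pos' hz
      set a := Real.log (z / γ) / l1 with ha
      have hl1 : l1 * a = Real.log (z / γ) := by rw [ha]; field_simp
      have hze : γ * Real.exp (l1 * a) = z := by
        rw [hl1, Real.exp_log hzd]; field_simp
      refine ⟨![(y - β) / (γ * gfun (l1 * a)), a, 0, 0, 0], ?_⟩
      funext j; fin_cases j
      · show α - γ * a * gfun (l1 * a) = x
        apply mul_left_cancel₀ h10
        linear_combination (-1 : ℝ) * h1 - hze + (-γ) * gfun_spec (l1 * a)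
      · simp
        field_simp [gfun_ne_zero]
        ring
      · simpa using hze
      · simp
      · simp
  case c6 =>
    rintro hγ rfl hσ
    ext p
    rw [mem_orbit_iff, Set.mem_setOf_eq]
    constructor
    · rintro ⟨U, hU⟩
      refine ⟨α - γ * U 1 * gfun (l1 * U 1),
        β + γ * (U 0 - l1 * U 2) * gfun (l1 * U 1) - σ * U 4 * gfun (U 1),
        γ * Real.exp (l1 * U 1), σ * Real.exp (U 1), sq_exp_pos σ (U 1) hσ, ?_, ?_, ?_⟩
      · linear_combination (-γ) * gfun_spec (l1 * U 1)
      · have hss : σ * Real.exp (U 1) / σ = Real.exp (U 1) := by field_simp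
        rw [hss, exp_rpow']
        linear_combination (-γ) * gfun_spec (l1 * U 1)
      · rw [← hU]; funext j; fin_cases j <;> simp <;> ring
    · rintro ⟨x, y, z, s, hs, h1, h2, rfl⟩
      have hsd : 0 < s / σ := div_pos_of_mul_pos' hs
      set a := Real.log (s / σ) with ha
      have hexp : Real.exp a = s / σ := Real.exp_log hsd
      have hze : γ * Real.exp (l1 * a) = z := by
        rw [← exp_rpow', hexp]
        linear_combination h2 - h1
      refine ⟨![(y - β) / (γ * gfun (l1 * a)), a, 0, 0, 0], ?_⟩
      funext j; fin_cases j
      · show α - γ * a * gfun (l1 * a) = x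
        apply mul_left_cancel₀ h10
        linear_combination (-1 : ℝ) * h1 - hze + (-γ) * gfun_spec (l1 * a)
      · simp
        field_simp [gfun_ne_zero]
        ring
      · simpa using hze
      · simp
      · simp [hexp]
        field_simp
  case c7 =>
    rintro hγ hδ rfl
    ext p
    rw [mem_orbit_iff, Set.mem_setOf_eq]
    constructor
    · rintro ⟨U, hU⟩
      refine ⟨α - γ * U 1 * gfun (l1 * U 1),
        β + γ * (U 0 - l1 * U 2) * gfun (l1 * U 1) - δ * (l2 * U 3) * gfun (l2 * U 1),
        γ * Real.exp (l1 * U 1), δ * Real.exp (l2 * U 1), sq_exp_pos δ (l2 * U 1) hδ, ?_, ?_, ?_⟩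
      · linear_combination (-γ) * gfun_spec (l1 * U 1)
      · have hss : δ * Real.exp (l2 * U 1) / δ = Real.exp (l2 * U 1) := by field_simp
        have hll : l1 / l2 * (l2 * U 1) = l1 * U 1 := by field_simp
        rw [hss, exp_rpow', hll]
        linear_combination (-γ) * gfun_spec (l1 * U 1)
      · rw [← hU]; funext j; fin_cases j <;> simp <;> ring
    · rintro ⟨x, y, z, t, ht, h1, h2, rfl⟩
      have htd : 0 < t / δ := div_pos_of_mul_pos' ht
      set a := Real.log (t / δ) / l2 with ha
      have hl2 : l2 * a = Real.log (t / δ) := by rw [ha]; field_simp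
      have hte : δ * Real.exp (l2 * a) = t := by
        rw [hl2, Real.exp_log htd]; field_simp
      have hll : l1 / l2 * (l2 * a) = l1 * a := by field_simp
      have hze : γ * Real.exp (l1 * a) = z := by
        rw [← hll, ← exp_rpow', hl2, Real.exp_log htd]
        linear_combination h2 - h1
      refine ⟨![(y - β) / (γ * gfun (l1 * a)), a, 0, 0, 0], ?_⟩
      funext j; fin_cases j
      · show α - γ * a * gfun (l1 * a) = x
        apply mul_left_cancel₀ h10
        linear_combination (-1 : ℝ) * h1 - hze + (-γ) * gfun_spec (l1 * a)
      · simp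
        field_simp [gfun_ne_zero]
        ring
      · simpa using hze
      · simpa using hte
      · simp
  case c8 =>
    rintro hγ hδ hσ
    ext p
    rw [mem_orbit_iff, Set.mem_setOf_eq]
    constructor
    · rintro ⟨U, hU⟩
      refine ⟨α - γ * U 1 * gfun (l1 * U 1),
        β + γ * (U 0 - l1 * U 2) * gfun (l1 * U 1) - δ * (l2 * U 3) * gfun (l2 * U 1)
          - σ * U 4 * gfun (U 1),
        γ * Real.exp (l1 * U 1), δ * Real.exp (l2 * U 1), σ * Real.exp (U 1),
        sq_exp_pos σ (U 1) hσ, ?_, ?_, ?_, ?_⟩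
      · linear_combination (-γ) * gfun_spec (l1 * U 1)
      · have hss : σ * Real.exp (U 1) / σ = Real.exp (U 1) := by field_simp
        rw [hss, exp_rpow']
        linear_combination (-γ) * gfun_spec (l1 * U 1)
      · have hss : σ * Real.exp (U 1) / σ = Real.exp (U 1) := by field_simp
        rw [hss, exp_rpow']
      · exact hU.symm
    · rintro ⟨x, y, z, t, s, hs, h1, h2, h3, rfl⟩
      have hsd : 0 < s / σ := div_pos_of_mul_pos' hs
      set a := Real.log (s / σ) with ha
      have hexp : Real.exp a = s / σ := Real.exp_log hsd
      have hze : γ * Real.exp (l1 * a) = z := by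
        rw [← exp_rpow', hexp]
        linear_combination h2 - h1
      have hte : δ * Real.exp (l2 * a) = t := by
        rw [← exp_rpow', hexp]
        exact h3.symm
      refine ⟨![(y - β) / (γ * gfun (l1 * a)), a, 0, 0, 0], ?_⟩
      funext j; fin_cases j
      · show α - γ * a * gfun (l1 * a) = x
        apply mul_left_cancel₀ h10
        linear_combination (-1 : ℝ) * h1 - hze + (-γ) * gfun_spec (l1 * a)
      · simp
        field_simp [gfun_ne_zero]
        ring
      · simpa using hze
      · simpa using hte
      · simp [hexp]
        field_simp
end

section
/- Let g = g_{5,3,1(λ1,λ2)}. For every F ∈ g*, the skew-symmetric bilinear form B_F has rank either 0 or 2; equivalently, the subspace {X ∈ g : F([X, Y]) = 0 for all Y ∈ g} has dimension 5 or 3. (This is the infinitesimal MD-condition: every coadjoint orbit of the corresponding connected simply connected Lie group G_{5,3,1(λ1,λ2)} has dimension 0 or 2, so it is an MD5-group.) -/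
open scoped Matrix

/-- The matrix (in the basis (X₁, ..., X₅)) of the skew-symmetric bilinear form
B_F(X, Y) = F([X, Y]); the functional F is identified with its coordinate vector with
respect to the dual basis, acting by the dot product. -/
def BFg531 (l1 l2 : ℝ) (F : Fin 5 → ℝ) : Matrix (Fin 5) (Fin 5) ℝ :=
  Matrix.of fun i j => F ⬝ᵥ bracketg531 l1 l2 (Pi.single i 1) (Pi.single j 1)

/-- The radical {X ∈ g | F([X, Y]) = 0 for all Y ∈ g} of the form B_F, as a subspace. -/
def radg531 (l1 l2 : ℝ) (F : Fin 5 → ℝ) : Submodule ℝ (Fin 5 → ℝ) where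
  carrier := {X | ∀ Y : Fin 5 → ℝ, F ⬝ᵥ bracketg531 l1 l2 X Y = 0}
  zero_mem' := by
    intro Y
    simp [bracketg531, dotProduct, Fin.sum_univ_five]
  add_mem' := by
    intro a b ha hb Y
    have h1 := ha Y
    have h2 := hb Y
    simp only [bracketg531, dotProduct, Fin.sum_univ_five, Matrix.cons_val_zero,
      Matrix.cons_val_one, Matrix.head_cons, Matrix.cons_val_two, Matrix.tail_cons,
      Matrix.cons_val_three, Matrix.cons_val_four, Pi.add_apply] at h1 h2 ⊢
    linear_combination h1 + h2
  smul_mem' := by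
    intro c a ha Y
    have h1 := ha Y
    simp only [bracketg531, dotProduct, Fin.sum_univ_five, Matrix.cons_val_zero,
      Matrix.cons_val_one, Matrix.head_cons, Matrix.cons_val_two, Matrix.tail_cons,
      Matrix.cons_val_three, Matrix.cons_val_four, Pi.smul_apply, smul_eq_mul] at h1 ⊢
    linear_combination c * h1


theorem BF_explicit (l1 l2 : ℝ) (F : Fin 5 → ℝ) :
    BFg531 l1 l2 F = !![0, F 2, 0, 0, 0;
                       -F 2, 0, l1 * F 2, l2 * F 3, F 4;
                       0, -(l1 * F 2), 0, 0, 0;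
                       0, -(l2 * F 3), 0, 0, 0;
                       0, -F 4, 0, 0, 0] := by
  ext i j
  fin_cases i <;> fin_cases j <;>
    simp [BFg531, bracketg531, dotProduct, Fin.sum_univ_five, Pi.single_apply,
      Matrix.vecHead, Matrix.vecTail] <;> ring

noncomputable def Lmap (l1 l2 a b c : ℝ) : (Fin 5 → ℝ) →ₗ[ℝ] ℝ × ℝ :=
  LinearMap.prod (LinearMap.proj 1)
    (a • LinearMap.proj 0 - (l1*a) • LinearMap.proj 2 - (l2*b) • LinearMap.proj 3
      - c • LinearMap.proj 4)

theorem Lmap_apply (l1 l2 a b c : ℝ) (X : Fin 5 → ℝ) :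
    Lmap l1 l2 a b c X = (X 1, a * X 0 - l1*a * X 2 - l2*b * X 3 - c * X 4) := by
  simp [Lmap]

theorem Lmap_surj (l1 l2 a b c : ℝ) (h2 : l2 ≠ 0) (h : ¬(a = 0 ∧ b = 0 ∧ c = 0)) :
    Function.Surjective (Lmap l1 l2 a b c) := by
  rintro ⟨s, t⟩
  by_cases ha : a = 0
  · by_cases hb : b = 0
    · have hc : c ≠ 0 := by tauto
      refine ⟨![0, s, 0, 0, -t/c], ?_⟩
      rw [Lmap_apply]
      simp [ha, hb]
      field_simp
    · refine ⟨![0, s, 0, -t/(l2*b), 0], ?_⟩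
      rw [Lmap_apply]
      simp [ha]
      field_simp
  · refine ⟨![t/a, s, 0, 0, 0], ?_⟩
    rw [Lmap_apply]
    simp
    field_simp

theorem mulVec_explicit (l1 l2 : ℝ) (F X : Fin 5 → ℝ) :
    (BFg531 l1 l2 F).mulVec X =
      ![F 2 * X 1, -(F 2) * X 0 + l1 * F 2 * X 2 + l2 * F 3 * X 3 + F 4 * X 4,
        -(l1 * F 2) * X 1, -(l2 * F 3) * X 1, -(F 4) * X 1] := by
  rw [BF_explicit]
  funext i
  fin_cases i <;>
    simp [Matrix.mulVec, dotProduct, Fin.sum_univ_five, Matrix.vecHead, Matrix.vecTail] <;> ring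

theorem ker_eq (l1 l2 : ℝ) (h2 : l2 ≠ 0) (F : Fin 5 → ℝ)
    (h : ¬(F 2 = 0 ∧ F 3 = 0 ∧ F 4 = 0)) :
    LinearMap.ker (BFg531 l1 l2 F).mulVecLin = LinearMap.ker (Lmap l1 l2 (F 2) (F 3) (F 4)) := by
  ext X
  simp only [LinearMap.mem_ker, Matrix.mulVecLin_apply, mulVec_explicit, Lmap_apply,
    Prod.ext_iff, Prod.fst_zero, Prod.snd_zero]
  constructor
  · intro hX
    have h0 := congrFun hX 0
    have he1 := congrFun hX 1
    have h3 := congrFun hX 3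
    have h4 := congrFun hX 4
    simp only [Matrix.cons_val_zero, Matrix.cons_val_one, Matrix.head_cons, Matrix.cons_val_two,
      Matrix.tail_cons, Matrix.cons_val_three, Matrix.cons_val_four, Pi.zero_apply] at h0 he1 h3 h4
    have hX1 : X 1 = 0 := by
      by_cases ha : F 2 = 0
      · by_cases hb : F 3 = 0
        · have hc : F 4 ≠ 0 := by tauto
          rcases mul_eq_zero.mp h4 with hh | hh
          · rw [neg_eq_zero] at hh; exact absurd hh hc
          · exact hh
        · rcases mul_eq_zero.mp h3 with hh | hh
          · exfalso; rw [neg_eq_zero, mul_eq_zero] at hh; tauto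
          · exact hh
      · rcases mul_eq_zero.mp h0 with hh | hh
        · exact absurd hh ha
        · exact hh
    refine ⟨hX1, ?_⟩
    linear_combination -he1
  · rintro ⟨hA, hB⟩
    funext i
    fin_cases i <;> simp [Matrix.vecHead, Matrix.vecTail, hA] <;> linear_combination -hB

theorem rad_eq_ker (l1 l2 : ℝ) (F : Fin 5 → ℝ) :
    radg531 l1 l2 F = LinearMap.ker (BFg531 l1 l2 F).mulVecLin := by
  ext X
  have hmem : X ∈ radg531 l1 l2 F ↔ ∀ Y : Fin 5 → ℝ, F ⬝ᵥ bracketg531 l1 l2 X Y = 0 := Iff.rfl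
  rw [hmem, LinearMap.mem_ker, Matrix.mulVecLin_apply, mulVec_explicit]
  constructor
  · intro hX
    have h0 := hX ![1, 0, 0, 0, 0]
    have h1 := hX ![0, 1, 0, 0, 0]
    have h2 := hX ![0, 0, 1, 0, 0]
    have h3 := hX ![0, 0, 0, 1, 0]
    have h4 := hX ![0, 0, 0, 0, 1]
    simp only [bracketg531, dotProduct, Fin.sum_univ_five, Matrix.cons_val_zero,
      Matrix.cons_val_one, Matrix.head_cons, Matrix.cons_val_two, Matrix.tail_cons,
      Matrix.cons_val_three, Matrix.cons_val_four] at h0 h1 h2 h3 h4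
    funext i
    fin_cases i <;> simp [-mul_eq_zero, Matrix.vecHead, Matrix.vecTail] <;>
      first
      | linear_combination h0 | linear_combination -h0
      | linear_combination h1 | linear_combination -h1
      | linear_combination h2 | linear_combination -h2
      | linear_combination h3 | linear_combination -h3
      | linear_combination h4 | linear_combination -h4
  · intro hX Y
    have h0 := congrFun hX 0
    have h1 := congrFun hX 1
    have h2 := congrFun hX 2
    have h3 := congrFun hX 3
    have h4 := congrFun hX 4
    simp only [Matrix.cons_val_zero, Matrix.cons_val_one, Matrix.head_cons, Matrix.cons_val_two,
      Matrix.tail_cons, Matrix.cons_val_three, Matrix.cons_val_four, Pi.zero_apply] at h0 h1 h2 h3 h4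
    simp only [bracketg531, dotProduct, Fin.sum_univ_five, Matrix.cons_val_zero,
      Matrix.cons_val_one, Matrix.head_cons, Matrix.cons_val_two, Matrix.tail_cons,
      Matrix.cons_val_three, Matrix.cons_val_four]
    linear_combination (-Y 0) * h0 + (-Y 1) * h1 + (-Y 2) * h2 + (-Y 3) * h3 + (-Y 4) * h4

/-- For every functional F, the skew-symmetric form B_F has rank 0 or 2; equivalently,
its radical {X | F([X, Y]) = 0 for all Y} has dimension 5 or 3 (the infinitesimal
MD-condition: every coadjoint orbit has dimension 0 or 2). -/
theorem md_condition_g531 (l1 l2 : ℝ) (h10 : l1 ≠ 0) (h11 : l1 ≠ 1) (h20 : l2 ≠ 0) (h21 : l2 ≠ 1) (h12 : l1 ≠ l2) (F : Fin 5 → ℝ) :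
    ((BFg531 l1 l2 F).rank = 0 ∨ (BFg531 l1 l2 F).rank = 2) ∧
    (Module.finrank ℝ (radg531 l1 l2 F) = 5 ∨ Module.finrank ℝ (radg531 l1 l2 F) = 3) := by
  have hrn := LinearMap.finrank_range_add_finrank_ker (BFg531 l1 l2 F).mulVecLin
  rw [Module.finrank_fin_fun] at hrn
  have hrank : (BFg531 l1 l2 F).rank
      = Module.finrank ℝ (LinearMap.range (BFg531 l1 l2 F).mulVecLin) := rfl
  by_cases h : F 2 = 0 ∧ F 3 = 0 ∧ F 4 = 0
  · have hB : BFg531 l1 l2 F = 0 := by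
      rw [BF_explicit]
      obtain ⟨ha, hb, hc⟩ := h
      rw [ha, hb, hc]
      ext i j
      fin_cases i <;> fin_cases j <;> simp [Matrix.vecHead, Matrix.vecTail]
    constructor
    · left
      rw [hB]
      exact Matrix.rank_zero
    · left
      rw [rad_eq_ker, hB, Matrix.mulVecLin_zero, LinearMap.ker_zero, finrank_top,
        Module.finrank_fin_fun]
  · have hs := Lmap_surj l1 l2 (F 2) (F 3) (F 4) h20 h
    have hr2 := LinearMap.finrank_range_add_finrank_ker (Lmap l1 l2 (F 2) (F 3) (F 4))
    rw [LinearMap.range_eq_top.mpr hs, Module.finrank_fin_fun, finrank_top] at hr2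
    have hdim2 : Module.finrank ℝ (ℝ × ℝ) = 2 := by
      simp [Module.finrank_prod]
    have hker3 : Module.finrank ℝ (LinearMap.ker (Lmap l1 l2 (F 2) (F 3) (F 4))) = 3 := by
      omega
    have hke := ker_eq l1 l2 h20 F h
    constructor
    · right
      rw [hrank]
      rw [hke] at hrn
      omega
    · right
      rw [rad_eq_ker, hke, hker3]
end
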